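/- In the four-node ADT deterministic two-way function-multicast network, every achievable rate pair (R,R̃) satisfies the cut-set bounds R + R̃ ≤ m + m̃ and R + R̃ ≤ n + ñ. -/

import Mathlib

open Matrix Filter

namespace TwoWay

/-- The `q × q` shift matrix over `𝔽₂`: entry `(i,j)` is `1` iff `i = j + 1`. -/
def shiftG (q : ℕ) : Matrix (Fin q) (Fin q) (ZMod 2) :=
  Matrix.of fun i j => if (i : ℕ) = (j : ℕ) + 1 then 1 else 0

/-- Outputs of a symmetric ADT deterministic channel pair with direct-link level `n`
and cross-link level `m`: given inputs `x₁, x₂ ∈ 𝔽₂^{max m n}` it returns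
`(Y₁, Y₂) = (G^{q-n} x₁ + G^{q-m} x₂, G^{q-m} x₁ + G^{q-n} x₂)` where `q = max m n`. -/
def chOut (m n : ℕ) (x1 x2 : Fin (max m n) → ZMod 2) :
    (Fin (max m n) → ZMod 2) × (Fin (max m n) → ZMod 2) :=
  (shiftG (max m n) ^ (max m n - n) *ᵥ x1 + shiftG (max m n) ^ (max m n - m) *ᵥ x2,
   shiftG (max m n) ^ (max m n - m) *ᵥ x1 + shiftG (max m n) ^ (max m n - n) *ᵥ x2)

/-- A code of block length `N` for the four-node ADT deterministic two-way
function-multicast network with forward parameters `(m, n)` and backward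
parameters `(mt, nt)`.  Nodes `1, 2` carry forward sources of length `K`
(encoders `f1, f2`, taking the node's own source and its past received backward
signals); nodes `1̃, 2̃` carry backward sources of length `Kt` (encoders
`ft1, ft2`).  `dect1, dect2` are the decoders at nodes `1̃, 2̃` for the forward
modulo-2 sum, and `dec1, dec2` the decoders at nodes `1, 2` for the backward
modulo-2 sum. -/
structure Code (m n mt nt : ℕ) where
  N : ℕ
  Npos : 0 < N
  K : ℕ
  Kt : ℕ
  f1 : (i : ℕ) → (Fin K → ZMod 2) → (Fin i → (Fin (max mt nt) → ZMod 2)) →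
    (Fin (max m n) → ZMod 2)
  f2 : (i : ℕ) → (Fin K → ZMod 2) → (Fin i → (Fin (max mt nt) → ZMod 2)) →
    (Fin (max m n) → ZMod 2)
  ft1 : (i : ℕ) → (Fin Kt → ZMod 2) → (Fin i → (Fin (max m n) → ZMod 2)) →
    (Fin (max mt nt) → ZMod 2)
  ft2 : (i : ℕ) → (Fin Kt → ZMod 2) → (Fin i → (Fin (max m n) → ZMod 2)) →
    (Fin (max mt nt) → ZMod 2)
  dec1 : (Fin N → (Fin (max mt nt) → ZMod 2)) → (Fin Kt → ZMod 2)
  dec2 : (Fin N → (Fin (max mt nt) → ZMod 2)) → (Fin Kt → ZMod 2)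
  dect1 : (Fin N → (Fin (max m n) → ZMod 2)) → (Fin K → ZMod 2)
  dect2 : (Fin N → (Fin (max m n) → ZMod 2)) → (Fin K → ZMod 2)

variable {m n mt nt : ℕ}

/-- The tuple of transmitted signals `(X₁ᵢ, X₂ᵢ, X̃₁ᵢ, X̃₂ᵢ)` at one time instant. -/
abbrev Sig (m n mt nt : ℕ) : Type :=
  (Fin (max m n) → ZMod 2) × (Fin (max m n) → ZMod 2) ×
  (Fin (max mt nt) → ZMod 2) × (Fin (max mt nt) → ZMod 2)

/-- One time step: the four encoders applied to the sources and the past received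
signals determined by the history `h` of transmitted signals.  Node `k`'s encoder
sees `Ỹ_k^{i-1}` and node `k̃`'s encoder sees `Y_k^{i-1}`. -/
def step (C : Code m n mt nt) (s1 s2 : Fin C.K → ZMod 2) (t1 t2 : Fin C.Kt → ZMod 2)
    (i : ℕ) (h : Fin i → Sig m n mt nt) : Sig m n mt nt :=
  (C.f1 i s1 (fun j => (chOut mt nt (h j).2.2.1 (h j).2.2.2).1),
   C.f2 i s2 (fun j => (chOut mt nt (h j).2.2.1 (h j).2.2.2).2),
   C.ft1 i t1 (fun j => (chOut m n (h j).1 (h j).2.1).1),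
   C.ft2 i t2 (fun j => (chOut m n (h j).1 (h j).2.1).2))

/-- The history of transmitted signals up to (exclusive) time `i`, determined by
the sources. -/
def hist (C : Code m n mt nt) (s1 s2 : Fin C.K → ZMod 2) (t1 t2 : Fin C.Kt → ZMod 2) :
    (i : ℕ) → Fin i → Sig m n mt nt
  | 0 => Fin.elim0
  | i + 1 => Fin.snoc (hist C s1 s2 t1 t2 i) (step C s1 s2 t1 t2 i (hist C s1 s2 t1 t2 i))

/-- Node `1̃`'s received sequence `Y₁^N`. -/
def recvF1 (C : Code m n mt nt) (s1 s2 : Fin C.K → ZMod 2) (t1 t2 : Fin C.Kt → ZMod 2) :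
    Fin C.N → Fin (max m n) → ZMod 2 :=
  fun i => (chOut m n (hist C s1 s2 t1 t2 C.N i).1 (hist C s1 s2 t1 t2 C.N i).2.1).1

/-- Node `2̃`'s received sequence `Y₂^N`. -/
def recvF2 (C : Code m n mt nt) (s1 s2 : Fin C.K → ZMod 2) (t1 t2 : Fin C.Kt → ZMod 2) :
    Fin C.N → Fin (max m n) → ZMod 2 :=
  fun i => (chOut m n (hist C s1 s2 t1 t2 C.N i).1 (hist C s1 s2 t1 t2 C.N i).2.1).2

/-- Node `1`'s received sequence `Ỹ₁^N`. -/
def recvB1 (C : Code m n mt nt) (s1 s2 : Fin C.K → ZMod 2) (t1 t2 : Fin C.Kt → ZMod 2) :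
    Fin C.N → Fin (max mt nt) → ZMod 2 :=
  fun i => (chOut mt nt (hist C s1 s2 t1 t2 C.N i).2.2.1 (hist C s1 s2 t1 t2 C.N i).2.2.2).1

/-- Node `2`'s received sequence `Ỹ₂^N`. -/
def recvB2 (C : Code m n mt nt) (s1 s2 : Fin C.K → ZMod 2) (t1 t2 : Fin C.Kt → ZMod 2) :
    Fin C.N → Fin (max mt nt) → ZMod 2 :=
  fun i => (chOut mt nt (hist C s1 s2 t1 t2 C.N i).2.2.1 (hist C s1 s2 t1 t2 C.N i).2.2.2).2

/-- The space of source realizations `(S₁^K, S₂^K, S̃₁^K̃, S̃₂^K̃)`;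
the sources are i.i.d. Bernoulli(1/2), i.e. uniform on this finite space. -/
abbrev SrcSpace (C : Code m n mt nt) : Type :=
  (Fin C.K → ZMod 2) × (Fin C.K → ZMod 2) × (Fin C.Kt → ZMod 2) × (Fin C.Kt → ZMod 2)

-- Probability of an event under the uniform (i.i.d. Bernoulli(1/2)) source
-- distribution.
open Classical in
noncomputable def probOf (C : Code m n mt nt) (E : SrcSpace C → Prop) : ℝ :=
  ((Finset.univ.filter E).card : ℝ) / (Fintype.card (SrcSpace C) : ℝ)

/-- Decoding error probability at node `1̃` (forward modulo-2 sum). -/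
noncomputable def errF1 (C : Code m n mt nt) : ℝ :=
  probOf C fun ω =>
    C.dect1 (recvF1 C ω.1 ω.2.1 ω.2.2.1 ω.2.2.2) ≠ fun k => ω.1 k + ω.2.1 k

/-- Decoding error probability at node `2̃` (forward modulo-2 sum). -/
noncomputable def errF2 (C : Code m n mt nt) : ℝ :=
  probOf C fun ω =>
    C.dect2 (recvF2 C ω.1 ω.2.1 ω.2.2.1 ω.2.2.2) ≠ fun k => ω.1 k + ω.2.1 k

/-- Decoding error probability at node `1` (backward modulo-2 sum). -/
noncomputable def errB1 (C : Code m n mt nt) : ℝ :=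
  probOf C fun ω =>
    C.dec1 (recvB1 C ω.1 ω.2.1 ω.2.2.1 ω.2.2.2) ≠ fun k => ω.2.2.1 k + ω.2.2.2 k

/-- Decoding error probability at node `2` (backward modulo-2 sum). -/
noncomputable def errB2 (C : Code m n mt nt) : ℝ :=
  probOf C fun ω =>
    C.dec2 (recvB2 C ω.1 ω.2.1 ω.2.2.1 ω.2.2.2) ≠ fun k => ω.2.2.1 k + ω.2.2.2 k

/-- A rate pair `(R, R̃) = (K/N, K̃/N)` is achievable if there is a family of codes
whose block lengths tend to infinity and whose four decoding error probabilities
tend to `0`. -/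
def Achievable (m n mt nt : ℕ) (R Rt : ℝ) : Prop :=
  ∃ Cs : ℕ → Code m n mt nt,
    Tendsto (fun ν => (Cs ν).N) atTop atTop ∧
    (∀ ν, ((Cs ν).K : ℝ) / ((Cs ν).N : ℝ) = R) ∧
    (∀ ν, ((Cs ν).Kt : ℝ) / ((Cs ν).N : ℝ) = Rt) ∧
    Tendsto (fun ν => errF1 (Cs ν)) atTop (nhds 0) ∧
    Tendsto (fun ν => errF2 (Cs ν)) atTop (nhds 0) ∧
    Tendsto (fun ν => errB1 (Cs ν)) atTop (nhds 0) ∧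
    Tendsto (fun ν => errB2 (Cs ν)) atTop (nhds 0)

/-- The computation capacity region: the closure of the set of achievable rate pairs. -/
def CapacityRegion (m n mt nt : ℕ) : Set (ℝ × ℝ) :=
  closure {p : ℝ × ℝ | Achievable m n mt nt p.1 p.2}

/-- The perfect-feedback computation capacity: `n` if `m = n`, and
`(2/3) max(m,n)` otherwise (i.e. `(2/3)n` if `m < n` and `(2/3)m` if `m > n`). -/
noncomputable def Cpf (m n : ℕ) : ℝ :=
  if m = n then (n : ℝ) else (2 / 3) * (max m n : ℝ)

end TwoWay

namespace TwoWay

variable {m n mt nt : ℕ}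

lemma shiftG_mulVec' (q : ℕ) (x : Fin q → ZMod 2) (i : Fin q) :
    (shiftG q *ᵥ x) i = if h : 1 ≤ (i : ℕ) then x ⟨(i : ℕ) - 1, by omega⟩ else 0 := by
  unfold shiftG Matrix.mulVec dotProduct
  simp only [Matrix.of_apply, ite_mul, one_mul, zero_mul]
  split
  · rename_i h
    rw [Finset.sum_eq_single (⟨(i : ℕ) - 1, by omega⟩ : Fin q)]
    · simp [Fin.ext_iff]; omega
    · intro b _ hb
      rw [if_neg]
      intro hc
      exact hb (by simp [Fin.ext_iff]; omega)
    · simp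
  · rename_i h
    apply Finset.sum_eq_zero
    intro b _
    rw [if_neg]; omega

lemma shiftG_pow_mulVec (q k : ℕ) (x : Fin q → ZMod 2) (i : Fin q) :
    ((shiftG q ^ k) *ᵥ x) i = if h : k ≤ (i : ℕ) then x ⟨(i : ℕ) - k, by omega⟩ else 0 := by
  induction k generalizing x i with
  | zero => simp
  | succ k ih =>
    rw [pow_succ', ← Matrix.mulVec_mulVec, shiftG_mulVec']
    split
    · rename_i h
      rw [ih]
      split
      · rename_i h2
        simp only [Fin.val_mk] at h2
        rw [dif_pos (by omega)]
        congr 1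
        simp only [Fin.val_mk, Fin.mk.injEq]
        omega
      · rename_i h2
        simp only [Fin.val_mk] at h2
        rw [dif_neg (by omega)]
    · rw [dif_neg (by omega)]

lemma shiftG_pow_mulVec_congr (q k : ℕ) (x x' : Fin q → ZMod 2)
    (h : ∀ j : Fin q, (j : ℕ) + k < q → x j = x' j) :
    (shiftG q ^ k) *ᵥ x = (shiftG q ^ k) *ᵥ x' := by
  funext i
  rw [shiftG_pow_mulVec, shiftG_pow_mulVec]
  split
  · rename_i hk
    exact h _ (by simp; omega)
  · rfl

lemma chOut_fst_congr (a b : ℕ) (x1 x1' x2 x2' : Fin (max a b) → ZMod 2)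
    (h1 : shiftG (max a b) ^ (max a b - b) *ᵥ x1 = shiftG (max a b) ^ (max a b - b) *ᵥ x1')
    (h2 : shiftG (max a b) ^ (max a b - a) *ᵥ x2 = shiftG (max a b) ^ (max a b - a) *ᵥ x2') :
    (chOut a b x1 x2).1 = (chOut a b x1' x2').1 := by
  unfold chOut
  simp only
  rw [h1, h2]

lemma chOut_snd_congr (a b : ℕ) (x1 x1' x2 x2' : Fin (max a b) → ZMod 2)
    (h1 : shiftG (max a b) ^ (max a b - a) *ᵥ x1 = shiftG (max a b) ^ (max a b - a) *ᵥ x1')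
    (h2 : shiftG (max a b) ^ (max a b - b) *ᵥ x2 = shiftG (max a b) ^ (max a b - b) *ᵥ x2') :
    (chOut a b x1 x2).2 = (chOut a b x1' x2').2 := by
  unfold chOut
  simp only
  rw [h1, h2]

/-- The signal tuple transmitted at time `j`. -/
def sigAt (C : Code m n mt nt) (s1 s2 : Fin C.K → ZMod 2) (t1 t2 : Fin C.Kt → ZMod 2)
    (j : ℕ) : Sig m n mt nt :=
  step C s1 s2 t1 t2 j (hist C s1 s2 t1 t2 j)

lemma hist_eq_sigAt (C : Code m n mt nt) (s1 s2 : Fin C.K → ZMod 2)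
    (t1 t2 : Fin C.Kt → ZMod 2) : ∀ (i : ℕ) (j : Fin i),
    hist C s1 s2 t1 t2 i j = sigAt C s1 s2 t1 t2 (j : ℕ) := by
  intro i
  induction i with
  | zero => exact fun j => j.elim0
  | succ i ih =>
    intro j
    induction j using Fin.lastCases with
    | last => simp [hist, sigAt]
    | cast j => simp [hist, ih j]

end TwoWay

namespace TwoWay

variable {m n mt nt : ℕ}

/-- Cut `{1,1̃}` vs `{2,2̃}`: if the cross-cut signals (the first `m` coordinates of
`X₂` and first `m̃` coordinates of `X̃₂`) agree at all times, then the left-side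
transmissions `X₁, X̃₁` agree. -/
lemma key1 (C : Code m n mt nt) (s1 s2 s2' : Fin C.K → ZMod 2) (t1 t2 t2' : Fin C.Kt → ZMod 2)
    (H1 : ∀ j, j < C.N → ∀ k : Fin (max m n), (k : ℕ) + (max m n - m) < max m n →
        (sigAt C s1 s2 t1 t2 j).2.1 k = (sigAt C s1 s2' t1 t2' j).2.1 k)
    (H2 : ∀ j, j < C.N → ∀ k : Fin (max mt nt), (k : ℕ) + (max mt nt - mt) < max mt nt →
        (sigAt C s1 s2 t1 t2 j).2.2.2 k = (sigAt C s1 s2' t1 t2' j).2.2.2 k) :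
    ∀ j, j < C.N →
      (sigAt C s1 s2 t1 t2 j).1 = (sigAt C s1 s2' t1 t2' j).1 ∧
      (sigAt C s1 s2 t1 t2 j).2.2.1 = (sigAt C s1 s2' t1 t2' j).2.2.1 := by
  intro j
  induction j using Nat.strong_induction_on with
  | _ j ih =>
    intro hj
    constructor
    · show C.f1 j s1 _ = C.f1 j s1 _
      refine congrArg (C.f1 j s1) ?_
      funext l
      rw [hist_eq_sigAt, hist_eq_sigAt]
      exact chOut_fst_congr mt nt _ _ _ _
        (congrArg (fun v => shiftG (max mt nt) ^ (max mt nt - nt) *ᵥ v)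
          ((ih l l.2 (lt_trans l.2 hj)).2))
        (shiftG_pow_mulVec_congr _ _ _ _ (fun k hk => H2 l (lt_trans l.2 hj) k hk))
    · show C.ft1 j t1 _ = C.ft1 j t1 _
      refine congrArg (C.ft1 j t1) ?_
      funext l
      rw [hist_eq_sigAt, hist_eq_sigAt]
      exact chOut_fst_congr m n _ _ _ _
        (congrArg (fun v => shiftG (max m n) ^ (max m n - n) *ᵥ v)
          ((ih l l.2 (lt_trans l.2 hj)).1))
        (shiftG_pow_mulVec_congr _ _ _ _ (fun k hk => H1 l (lt_trans l.2 hj) k hk))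

lemma recvF1_eq (C : Code m n mt nt) (s1 s2 s2' : Fin C.K → ZMod 2)
    (t1 t2 t2' : Fin C.Kt → ZMod 2)
    (H1 : ∀ j, j < C.N → ∀ k : Fin (max m n), (k : ℕ) + (max m n - m) < max m n →
        (sigAt C s1 s2 t1 t2 j).2.1 k = (sigAt C s1 s2' t1 t2' j).2.1 k)
    (H2 : ∀ j, j < C.N → ∀ k : Fin (max mt nt), (k : ℕ) + (max mt nt - mt) < max mt nt →
        (sigAt C s1 s2 t1 t2 j).2.2.2 k = (sigAt C s1 s2' t1 t2' j).2.2.2 k) :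
    recvF1 C s1 s2 t1 t2 = recvF1 C s1 s2' t1 t2' := by
  funext i
  unfold recvF1
  rw [hist_eq_sigAt, hist_eq_sigAt]
  exact chOut_fst_congr m n _ _ _ _
    (congrArg (fun v => shiftG (max m n) ^ (max m n - n) *ᵥ v)
      ((key1 C s1 s2 s2' t1 t2 t2' H1 H2 i i.2).1))
    (shiftG_pow_mulVec_congr _ _ _ _ (fun k hk => H1 i i.2 k hk))

lemma recvB1_eq (C : Code m n mt nt) (s1 s2 s2' : Fin C.K → ZMod 2)
    (t1 t2 t2' : Fin C.Kt → ZMod 2)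
    (H1 : ∀ j, j < C.N → ∀ k : Fin (max m n), (k : ℕ) + (max m n - m) < max m n →
        (sigAt C s1 s2 t1 t2 j).2.1 k = (sigAt C s1 s2' t1 t2' j).2.1 k)
    (H2 : ∀ j, j < C.N → ∀ k : Fin (max mt nt), (k : ℕ) + (max mt nt - mt) < max mt nt →
        (sigAt C s1 s2 t1 t2 j).2.2.2 k = (sigAt C s1 s2' t1 t2' j).2.2.2 k) :
    recvB1 C s1 s2 t1 t2 = recvB1 C s1 s2' t1 t2' := by
  funext i
  unfold recvB1
  rw [hist_eq_sigAt, hist_eq_sigAt]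
  exact chOut_fst_congr mt nt _ _ _ _
    (congrArg (fun v => shiftG (max mt nt) ^ (max mt nt - nt) *ᵥ v)
      ((key1 C s1 s2 s2' t1 t2 t2' H1 H2 i i.2).2))
    (shiftG_pow_mulVec_congr _ _ _ _ (fun k hk => H2 i i.2 k hk))

/-- Cut `{1,2̃}` vs `{2,1̃}`: trace the first `n` coordinates of `X₂` and first `ñ`
coordinates of `X̃₁`; then `X₁, X̃₂` agree. -/
lemma key2 (C : Code m n mt nt) (s1 s2 s2' : Fin C.K → ZMod 2) (t1 t1' t2 : Fin C.Kt → ZMod 2)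
    (H1 : ∀ j, j < C.N → ∀ k : Fin (max m n), (k : ℕ) + (max m n - n) < max m n →
        (sigAt C s1 s2 t1 t2 j).2.1 k = (sigAt C s1 s2' t1' t2 j).2.1 k)
    (H2 : ∀ j, j < C.N → ∀ k : Fin (max mt nt), (k : ℕ) + (max mt nt - nt) < max mt nt →
        (sigAt C s1 s2 t1 t2 j).2.2.1 k = (sigAt C s1 s2' t1' t2 j).2.2.1 k) :
    ∀ j, j < C.N →
      (sigAt C s1 s2 t1 t2 j).1 = (sigAt C s1 s2' t1' t2 j).1 ∧
      (sigAt C s1 s2 t1 t2 j).2.2.2 = (sigAt C s1 s2' t1' t2 j).2.2.2 := by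
  intro j
  induction j using Nat.strong_induction_on with
  | _ j ih =>
    intro hj
    constructor
    · show C.f1 j s1 _ = C.f1 j s1 _
      refine congrArg (C.f1 j s1) ?_
      funext l
      rw [hist_eq_sigAt, hist_eq_sigAt]
      exact chOut_fst_congr mt nt _ _ _ _
        (shiftG_pow_mulVec_congr _ _ _ _ (fun k hk => H2 l (lt_trans l.2 hj) k hk))
        (congrArg (fun v => shiftG (max mt nt) ^ (max mt nt - mt) *ᵥ v)
          ((ih l l.2 (lt_trans l.2 hj)).2))
    · show C.ft2 j t2 _ = C.ft2 j t2 _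
      refine congrArg (C.ft2 j t2) ?_
      funext l
      rw [hist_eq_sigAt, hist_eq_sigAt]
      exact chOut_snd_congr m n _ _ _ _
        (congrArg (fun v => shiftG (max m n) ^ (max m n - m) *ᵥ v)
          ((ih l l.2 (lt_trans l.2 hj)).1))
        (shiftG_pow_mulVec_congr _ _ _ _ (fun k hk => H1 l (lt_trans l.2 hj) k hk))

lemma recvF2_eq (C : Code m n mt nt) (s1 s2 s2' : Fin C.K → ZMod 2)
    (t1 t1' t2 : Fin C.Kt → ZMod 2)
    (H1 : ∀ j, j < C.N → ∀ k : Fin (max m n), (k : ℕ) + (max m n - n) < max m n →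
        (sigAt C s1 s2 t1 t2 j).2.1 k = (sigAt C s1 s2' t1' t2 j).2.1 k)
    (H2 : ∀ j, j < C.N → ∀ k : Fin (max mt nt), (k : ℕ) + (max mt nt - nt) < max mt nt →
        (sigAt C s1 s2 t1 t2 j).2.2.1 k = (sigAt C s1 s2' t1' t2 j).2.2.1 k) :
    recvF2 C s1 s2 t1 t2 = recvF2 C s1 s2' t1' t2 := by
  funext i
  unfold recvF2
  rw [hist_eq_sigAt, hist_eq_sigAt]
  exact chOut_snd_congr m n _ _ _ _
    (congrArg (fun v => shiftG (max m n) ^ (max m n - m) *ᵥ v)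
      ((key2 C s1 s2 s2' t1 t1' t2 H1 H2 i i.2).1))
    (shiftG_pow_mulVec_congr _ _ _ _ (fun k hk => H1 i i.2 k hk))

lemma recvB1_eq' (C : Code m n mt nt) (s1 s2 s2' : Fin C.K → ZMod 2)
    (t1 t1' t2 : Fin C.Kt → ZMod 2)
    (H1 : ∀ j, j < C.N → ∀ k : Fin (max m n), (k : ℕ) + (max m n - n) < max m n →
        (sigAt C s1 s2 t1 t2 j).2.1 k = (sigAt C s1 s2' t1' t2 j).2.1 k)
    (H2 : ∀ j, j < C.N → ∀ k : Fin (max mt nt), (k : ℕ) + (max mt nt - nt) < max mt nt →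
        (sigAt C s1 s2 t1 t2 j).2.2.1 k = (sigAt C s1 s2' t1' t2 j).2.2.1 k) :
    recvB1 C s1 s2 t1 t2 = recvB1 C s1 s2' t1' t2 := by
  funext i
  unfold recvB1
  rw [hist_eq_sigAt, hist_eq_sigAt]
  exact chOut_fst_congr mt nt _ _ _ _
    (shiftG_pow_mulVec_congr _ _ _ _ (fun k hk => H2 i i.2 k hk))
    (congrArg (fun v => shiftG (max mt nt) ^ (max mt nt - mt) *ᵥ v)
      ((key2 C s1 s2 s2' t1 t1' t2 H1 H2 i i.2).2))

end TwoWay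

namespace TwoWay

variable {m n mt nt : ℕ}

open Classical in
lemma count1 (C : Code m n mt nt) :
    (@Finset.filter _ (fun ω : SrcSpace C =>
        C.dect1 (recvF1 C ω.1 ω.2.1 ω.2.2.1 ω.2.2.2) = (fun k => ω.1 k + ω.2.1 k) ∧
        C.dec1 (recvB1 C ω.1 ω.2.1 ω.2.2.1 ω.2.2.2) = (fun k => ω.2.2.1 k + ω.2.2.2 k)) (fun ω => Classical.propDecidable _) Finset.univ).card
      ≤ 2 ^ (C.K + C.Kt) * 2 ^ (C.N * (m + mt)) := by
  have hm : m ≤ max m n := le_max_left m n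
  have hmt : mt ≤ max mt nt := le_max_left mt nt
  let F : SrcSpace C → (Fin C.K → ZMod 2) × (Fin C.Kt → ZMod 2) ×
      (Fin C.N → (Fin m → ZMod 2) × (Fin mt → ZMod 2)) :=
    fun ω => (ω.1, ω.2.2.1, fun j =>
      (fun k => (sigAt C ω.1 ω.2.1 ω.2.2.1 ω.2.2.2 (j : ℕ)).2.1 ⟨k, lt_of_lt_of_le k.2 hm⟩,
       fun k => (sigAt C ω.1 ω.2.1 ω.2.2.1 ω.2.2.2 (j : ℕ)).2.2.2 ⟨k, lt_of_lt_of_le k.2 hmt⟩))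
  calc (@Finset.filter _ _ (fun ω => Classical.propDecidable _) Finset.univ).card
      ≤ (Finset.univ : Finset ((Fin C.K → ZMod 2) × (Fin C.Kt → ZMod 2) ×
          (Fin C.N → (Fin m → ZMod 2) × (Fin mt → ZMod 2)))).card := by
        apply Finset.card_le_card_of_injOn F (fun _ _ => Finset.mem_univ _)
        intro ω hω ω' hω' hFeq
        simp only [Finset.coe_filter, Set.mem_setOf_eq, Finset.mem_univ, true_and] at hω hω'
        simp only [F, Prod.mk.injEq] at hFeq
        obtain ⟨hs1, ht1, htr⟩ := hFeq
        obtain ⟨s1, s2, t1, t2⟩ := ω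
        obtain ⟨s1', s2', t1', t2'⟩ := ω'
        simp only at hs1 ht1 hω hω' ⊢
        subst hs1; subst ht1
        have H1 : ∀ j, j < C.N → ∀ k : Fin (max m n), (k : ℕ) + (max m n - m) < max m n →
            (sigAt C s1 s2 t1 t2 j).2.1 k = (sigAt C s1 s2' t1 t2' j).2.1 k := by
          intro j hj k hk
          have hk' : (k : ℕ) < m := by omega
          have := congrFun (congrArg (fun g => (g ⟨j, hj⟩).1) htr) ⟨(k : ℕ), hk'⟩
          simpa using this
        have H2 : ∀ j, j < C.N → ∀ k : Fin (max mt nt), (k : ℕ) + (max mt nt - mt) < max mt nt →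
            (sigAt C s1 s2 t1 t2 j).2.2.2 k = (sigAt C s1 s2' t1 t2' j).2.2.2 k := by
          intro j hj k hk
          have hk' : (k : ℕ) < mt := by omega
          have := congrFun (congrArg (fun g => (g ⟨j, hj⟩).2) htr) ⟨(k : ℕ), hk'⟩
          simpa using this
        have hrF := recvF1_eq C s1 s2 s2' t1 t2 t2' H1 H2
        have hrB := recvB1_eq C s1 s2 s2' t1 t2 t2' H1 H2
        have hsum : (fun k => s1 k + s2 k) = (fun k => s1 k + s2' k) := by
          rw [← hω.1, ← hω'.1, hrF]
        have htsum : (fun k => t1 k + t2 k) = (fun k => t1 k + t2' k) := by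
          rw [← hω.2, ← hω'.2, hrB]
        have hs2 : s2 = s2' := by
          funext k
          have := congrFun hsum k
          exact add_left_cancel this
        have ht2 : t2 = t2' := by
          funext k
          have := congrFun htsum k
          exact add_left_cancel this
        simp [hs2, ht2]
    _ = 2 ^ (C.K + C.Kt) * 2 ^ (C.N * (m + mt)) := by
        simp only [Finset.card_univ, Fintype.card_prod, Fintype.card_fun, Fintype.card_fin,
          ZMod.card]
        ring

end TwoWay

namespace TwoWay

variable {m n mt nt : ℕ}

open Classical in
lemma count2 (C : Code m n mt nt) :
    (@Finset.filter _ (fun ω : SrcSpace C =>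
        C.dect2 (recvF2 C ω.1 ω.2.1 ω.2.2.1 ω.2.2.2) = (fun k => ω.1 k + ω.2.1 k) ∧
        C.dec1 (recvB1 C ω.1 ω.2.1 ω.2.2.1 ω.2.2.2) = (fun k => ω.2.2.1 k + ω.2.2.2 k)) (fun ω => Classical.propDecidable _) Finset.univ).card
      ≤ 2 ^ (C.K + C.Kt) * 2 ^ (C.N * (n + nt)) := by
  have hn : n ≤ max m n := le_max_right m n
  have hnt : nt ≤ max mt nt := le_max_right mt nt
  let F : SrcSpace C → (Fin C.K → ZMod 2) × (Fin C.Kt → ZMod 2) ×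
      (Fin C.N → (Fin n → ZMod 2) × (Fin nt → ZMod 2)) :=
    fun ω => (ω.1, ω.2.2.2, fun j =>
      (fun k => (sigAt C ω.1 ω.2.1 ω.2.2.1 ω.2.2.2 (j : ℕ)).2.1 ⟨k, lt_of_lt_of_le k.2 hn⟩,
       fun k => (sigAt C ω.1 ω.2.1 ω.2.2.1 ω.2.2.2 (j : ℕ)).2.2.1 ⟨k, lt_of_lt_of_le k.2 hnt⟩))
  calc (@Finset.filter _ _ (fun ω => Classical.propDecidable _) Finset.univ).card
      ≤ (Finset.univ : Finset ((Fin C.K → ZMod 2) × (Fin C.Kt → ZMod 2) ×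
          (Fin C.N → (Fin n → ZMod 2) × (Fin nt → ZMod 2)))).card := by
        apply Finset.card_le_card_of_injOn F (fun _ _ => Finset.mem_univ _)
        intro ω hω ω' hω' hFeq
        simp only [Finset.coe_filter, Set.mem_setOf_eq, Finset.mem_univ, true_and] at hω hω'
        simp only [F, Prod.mk.injEq] at hFeq
        obtain ⟨hs1, ht2, htr⟩ := hFeq
        obtain ⟨s1, s2, t1, t2⟩ := ω
        obtain ⟨s1', s2', t1', t2'⟩ := ω'
        simp only at hs1 ht2 hω hω' ⊢
        subst hs1; subst ht2
        have H1 : ∀ j, j < C.N → ∀ k : Fin (max m n), (k : ℕ) + (max m n - n) < max m n →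
            (sigAt C s1 s2 t1 t2 j).2.1 k = (sigAt C s1 s2' t1' t2 j).2.1 k := by
          intro j hj k hk
          have hk' : (k : ℕ) < n := by omega
          have := congrFun (congrArg (fun g => (g ⟨j, hj⟩).1) htr) ⟨(k : ℕ), hk'⟩
          simpa using this
        have H2 : ∀ j, j < C.N → ∀ k : Fin (max mt nt), (k : ℕ) + (max mt nt - nt) < max mt nt →
            (sigAt C s1 s2 t1 t2 j).2.2.1 k = (sigAt C s1 s2' t1' t2 j).2.2.1 k := by
          intro j hj k hk
          have hk' : (k : ℕ) < nt := by omega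
          have := congrFun (congrArg (fun g => (g ⟨j, hj⟩).2) htr) ⟨(k : ℕ), hk'⟩
          simpa using this
        have hrF := recvF2_eq C s1 s2 s2' t1 t1' t2 H1 H2
        have hrB := recvB1_eq' C s1 s2 s2' t1 t1' t2 H1 H2
        have hsum : (fun k => s1 k + s2 k) = (fun k => s1 k + s2' k) := by
          rw [← hω.1, ← hω'.1, hrF]
        have htsum : (fun k => t1 k + t2 k) = (fun k => t1' k + t2 k) := by
          rw [← hω.2, ← hω'.2, hrB]
        have hs2 : s2 = s2' := by
          funext k
          exact add_left_cancel (congrFun hsum k)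
        have ht1 : t1 = t1' := by
          funext k
          exact add_right_cancel (congrFun htsum k)
        simp [hs2, ht1]
    _ = 2 ^ (C.K + C.Kt) * 2 ^ (C.N * (n + nt)) := by
        simp only [Finset.card_univ, Fintype.card_prod, Fintype.card_fun, Fintype.card_fin,
          ZMod.card]
        ring

end TwoWay

namespace TwoWay

variable {m n mt nt : ℕ}

lemma srcCard_pos (C : Code m n mt nt) : 0 < (Fintype.card (SrcSpace C) : ℝ) := by
  exact_mod_cast Fintype.card_pos

open Classical in
lemma probOf_union_bound (C : Code m n mt nt) (A B : SrcSpace C → Prop) :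
    1 - probOf C (fun ω => ¬ A ω) - probOf C (fun ω => ¬ B ω) ≤
      probOf C (fun ω => A ω ∧ B ω) := by
  have hT := srcCard_pos C
  have hcard : Fintype.card (SrcSpace C) ≤
      (@Finset.filter _ (fun ω => A ω ∧ B ω) (fun a => Classical.propDecidable _) Finset.univ).card +
      ((@Finset.filter _ (fun ω => ¬ A ω) (fun a => Classical.propDecidable _) Finset.univ).card +
       (@Finset.filter _ (fun ω => ¬ B ω) (fun a => Classical.propDecidable _) Finset.univ).card) := by
    calc Fintype.card (SrcSpace C) = (Finset.univ : Finset (SrcSpace C)).card := rfl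
      _ ≤ ((@Finset.filter _ (fun ω => A ω ∧ B ω) (fun a => Classical.propDecidable _) Finset.univ) ∪
            ((@Finset.filter _ (fun ω => ¬ A ω) (fun a => Classical.propDecidable _) Finset.univ) ∪
             (@Finset.filter _ (fun ω => ¬ B ω) (fun a => Classical.propDecidable _) Finset.univ))).card := by
          apply Finset.card_le_card
          intro ω _
          simp only [Finset.mem_union, Finset.mem_filter, Finset.mem_univ, true_and]
          by_cases hA : A ω
          · by_cases hB : B ω
            · exact Or.inl ⟨hA, hB⟩
            · exact Or.inr (Or.inr hB)
          · exact Or.inr (Or.inl hA)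
      _ ≤ _ := le_trans (Finset.card_union_le _ _)
            (by gcongr; exact Finset.card_union_le _ _)
  unfold probOf
  have h2 : ((Fintype.card (SrcSpace C)) : ℝ) ≤
      ((@Finset.filter _ (fun ω => A ω ∧ B ω) (fun a => Classical.propDecidable _) Finset.univ).card : ℝ) +
      (((@Finset.filter _ (fun ω => ¬ A ω) (fun a => Classical.propDecidable _) Finset.univ).card : ℝ) +
       ((@Finset.filter _ (fun ω => ¬ B ω) (fun a => Classical.propDecidable _) Finset.univ).card : ℝ)) := by exact_mod_cast hcard
  rw [sub_sub, ← add_div, sub_le_iff_le_add, ← add_div, one_le_div hT]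
  exact h2

end TwoWay

namespace TwoWay

variable {m n mt nt : ℕ}

lemma srcCard_eq (C : Code m n mt nt) :
    (Fintype.card (SrcSpace C) : ℝ) = 2 ^ (C.K + C.Kt) * 2 ^ (C.K + C.Kt) := by
  have : Fintype.card (SrcSpace C) = 2 ^ (C.K + C.Kt) * 2 ^ (C.K + C.Kt) := by
    simp only [Fintype.card_prod, Fintype.card_fun, Fintype.card_fin, ZMod.card]
    ring
  exact_mod_cast this

open Classical in
lemma code_bound1 (C : Code m n mt nt) :
    1 - errF1 C - errB1 C ≤ (2 : ℝ) ^ (C.N * (m + mt)) / 2 ^ (C.K + C.Kt) := by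
  have hT := srcCard_pos C
  have h1 := probOf_union_bound C
    (fun ω => C.dect1 (recvF1 C ω.1 ω.2.1 ω.2.2.1 ω.2.2.2) = fun k => ω.1 k + ω.2.1 k)
    (fun ω => C.dec1 (recvB1 C ω.1 ω.2.1 ω.2.2.1 ω.2.2.2) = fun k => ω.2.2.1 k + ω.2.2.2 k)
  have hA : errF1 C = probOf C
      (fun ω => ¬ (C.dect1 (recvF1 C ω.1 ω.2.1 ω.2.2.1 ω.2.2.2) = fun k => ω.1 k + ω.2.1 k)) := rfl
  have hB : errB1 C = probOf C
      (fun ω => ¬ (C.dec1 (recvB1 C ω.1 ω.2.1 ω.2.2.1 ω.2.2.2) = fun k => ω.2.2.1 k + ω.2.2.2 k)) := rfl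
  rw [hA, hB]
  refine le_trans h1 ?_
  unfold probOf
  rw [srcCard_eq C]
  have hc : ((@Finset.filter _ (fun ω : SrcSpace C =>
      (C.dect1 (recvF1 C ω.1 ω.2.1 ω.2.2.1 ω.2.2.2) = fun k => ω.1 k + ω.2.1 k) ∧
      (C.dec1 (recvB1 C ω.1 ω.2.1 ω.2.2.1 ω.2.2.2) = fun k => ω.2.2.1 k + ω.2.2.2 k))
      (fun ω => Classical.propDecidable _) Finset.univ).card : ℝ)
      ≤ 2 ^ (C.K + C.Kt) * 2 ^ (C.N * (m + mt)) := by exact_mod_cast count1 C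
  calc _ ≤ ((2:ℝ) ^ (C.K + C.Kt) * 2 ^ (C.N * (m + mt))) /
        (2 ^ (C.K + C.Kt) * 2 ^ (C.K + C.Kt)) := by
        apply div_le_div_of_nonneg_right hc (by positivity)
    _ = (2 : ℝ) ^ (C.N * (m + mt)) / 2 ^ (C.K + C.Kt) := by
        rw [mul_div_mul_left _ _ (by positivity : ((2:ℝ) ^ (C.K + C.Kt)) ≠ 0)]

end TwoWay

namespace TwoWay

variable {m n mt nt : ℕ}

open Classical in
lemma code_bound2 (C : Code m n mt nt) :
    1 - errF2 C - errB1 C ≤ (2 : ℝ) ^ (C.N * (n + nt)) / 2 ^ (C.K + C.Kt) := by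
  have hT := srcCard_pos C
  have h1 := probOf_union_bound C
    (fun ω => C.dect2 (recvF2 C ω.1 ω.2.1 ω.2.2.1 ω.2.2.2) = fun k => ω.1 k + ω.2.1 k)
    (fun ω => C.dec1 (recvB1 C ω.1 ω.2.1 ω.2.2.1 ω.2.2.2) = fun k => ω.2.2.1 k + ω.2.2.2 k)
  have hA : errF2 C = probOf C
      (fun ω => ¬ (C.dect2 (recvF2 C ω.1 ω.2.1 ω.2.2.1 ω.2.2.2) = fun k => ω.1 k + ω.2.1 k)) := rfl
  have hB : errB1 C = probOf C
      (fun ω => ¬ (C.dec1 (recvB1 C ω.1 ω.2.1 ω.2.2.1 ω.2.2.2) = fun k => ω.2.2.1 k + ω.2.2.2 k)) := rfl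
  rw [hA, hB]
  refine le_trans h1 ?_
  unfold probOf
  rw [srcCard_eq C]
  have hc : ((@Finset.filter _ (fun ω : SrcSpace C =>
      (C.dect2 (recvF2 C ω.1 ω.2.1 ω.2.2.1 ω.2.2.2) = fun k => ω.1 k + ω.2.1 k) ∧
      (C.dec1 (recvB1 C ω.1 ω.2.1 ω.2.2.1 ω.2.2.2) = fun k => ω.2.2.1 k + ω.2.2.2 k))
      (fun ω => Classical.propDecidable _) Finset.univ).card : ℝ)
      ≤ 2 ^ (C.K + C.Kt) * 2 ^ (C.N * (n + nt)) := by exact_mod_cast count2 C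
  calc _ ≤ ((2:ℝ) ^ (C.K + C.Kt) * 2 ^ (C.N * (n + nt))) /
        (2 ^ (C.K + C.Kt) * 2 ^ (C.K + C.Kt)) := by
        apply div_le_div_of_nonneg_right hc (by positivity)
    _ = (2 : ℝ) ^ (C.N * (n + nt)) / 2 ^ (C.K + C.Kt) := by
        rw [mul_div_mul_left _ _ (by positivity : ((2:ℝ) ^ (C.K + C.Kt)) ≠ 0)]

open Filter in
lemma rate_le (a : ℕ) (R Rt : ℝ) (Cs : ℕ → Code m n mt nt)
    (hN : Tendsto (fun ν => (Cs ν).N) atTop atTop)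
    (hR : ∀ ν, ((Cs ν).K : ℝ) / ((Cs ν).N : ℝ) = R)
    (hRt : ∀ ν, ((Cs ν).Kt : ℝ) / ((Cs ν).N : ℝ) = Rt)
    (e1 e2 : ℕ → ℝ)
    (he1 : Tendsto e1 atTop (nhds 0)) (he2 : Tendsto e2 atTop (nhds 0))
    (hb : ∀ ν, 1 - e1 ν - e2 ν ≤ (2 : ℝ) ^ ((Cs ν).N * a) / 2 ^ ((Cs ν).K + (Cs ν).Kt)) :
    R + Rt ≤ (a : ℝ) := by
  have hev : ∀ᶠ ν in atTop, R + Rt ≤ (a : ℝ) + 1 / ((Cs ν).N : ℝ) := by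
    filter_upwards [he1.eventually (gt_mem_nhds (by norm_num : (0:ℝ) < 1/4)),
      he2.eventually (gt_mem_nhds (by norm_num : (0:ℝ) < 1/4))] with ν h1 h2
    have hNpos : (0:ℝ) < ((Cs ν).N : ℝ) := by exact_mod_cast (Cs ν).Npos
    have h3 : (1:ℝ)/2 ≤ 2 ^ ((Cs ν).N * a) / 2 ^ ((Cs ν).K + (Cs ν).Kt) :=
      le_trans (by linarith) (hb ν)
    have h4 : (2:ℝ) ^ ((Cs ν).K + (Cs ν).Kt) ≤ 2 ^ ((Cs ν).N * a + 1) := by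
      rw [div_le_div_iff₀ (by norm_num) (by positivity)] at h3
      rw [pow_succ]
      linarith
    have h5 : (Cs ν).K + (Cs ν).Kt ≤ (Cs ν).N * a + 1 := by
      have h4' : (2:ℕ) ^ ((Cs ν).K + (Cs ν).Kt) ≤ 2 ^ ((Cs ν).N * a + 1) := by
        exact_mod_cast h4
      exact (Nat.pow_le_pow_iff_right (by norm_num)).mp h4'
    rw [← hR ν, ← hRt ν, ← add_div, div_le_iff₀ hNpos]
    have h6 : (((Cs ν).K : ℝ) + ((Cs ν).Kt : ℝ)) ≤ ((Cs ν).N : ℝ) * a + 1 := by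
      exact_mod_cast h5
    have h7 : ((a : ℝ) + 1 / ((Cs ν).N : ℝ)) * ((Cs ν).N : ℝ)
        = ((Cs ν).N : ℝ) * a + 1 := by
      field_simp
    rw [h7]
    exact h6
  have hlim : Tendsto (fun ν => (a : ℝ) + 1 / ((Cs ν).N : ℝ)) atTop (nhds ((a : ℝ) + 0)) :=
    tendsto_const_nhds.add (tendsto_one_div_atTop_nhds_zero_nat.comp hN)
  have := ge_of_tendsto hlim hev
  linarith

end TwoWay

open TwoWay in
/-- Cut-set bounds: every achievable rate pair `(R, R̃)` satisfies
`R + R̃ ≤ m + m̃` and `R + R̃ ≤ n + ñ`. -/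
theorem achievable_cutset (m n mt nt : ℕ) (R Rt : ℝ)
    (h : Achievable m n mt nt R Rt) :
    R + Rt ≤ (m : ℝ) + (mt : ℝ) ∧ R + Rt ≤ (n : ℝ) + (nt : ℝ) := by
  obtain ⟨Cs, hN, hR, hRt, hF1, hF2, hB1, hB2⟩ := h
  constructor
  · have := rate_le (m + mt) R Rt Cs hN hR hRt (fun ν => errF1 (Cs ν)) (fun ν => errB1 (Cs ν))
      hF1 hB1 (fun ν => code_bound1 (Cs ν))
    push_cast at this
    linarith
  · have := rate_le (n + nt) R Rt Cs hN hR hRt (fun ν => errF2 (Cs ν)) (fun ν => errB1 (Cs ν))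
      hF2 hB1 (fun ν => code_bound2 (Cs ν))
    push_cast at this
    linarith
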